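/- Suppose S is join closed and Ψ'_{S,f_i}(x_i) ≠ 0 for every i = 1,…,n. Then rank [S]_{f_1,…,f_n} = n, i.e. the row-adjusted join matrix has full rank. -/

import Mathlib

open Finset Matrix
open scoped Classical

/-- If `S` is join closed and `Ψ'_{S,f i}(x i) ≠ 0` for every `i`, then the
row-adjusted join matrix `[S]_{f₁,…,fₙ}` has full rank `n`. -/
theorem row_adjusted_join_matrix_rank_of_ne_zero
    {P : Type*} [Lattice P] {n : ℕ}
    (x : Fin n → P) (f : Fin n → P → ℂ) (μ : Fin n → Fin n → ℂ)
    (hxinj : Function.Injective x)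
    (hxord : ∀ i j : Fin n, x i ≤ x j → i ≤ j)
    (hjoin : ∀ i j : Fin n, ∃ k : Fin n, x k = x i ⊔ x j)
    (hμ0 : ∀ i j : Fin n, ¬ x i ≤ x j → μ i j = 0)
    (hμ : ∀ i j : Fin n, x i ≤ x j →
      (∑ v ∈ univ.filter (fun v => x i ≤ x v ∧ x v ≤ x j), μ i v) =
        if i = j then 1 else 0)
    (hΨ : ∀ i : Fin n,
      (∑ v ∈ univ.filter (fun v => x i ≤ x v), f i (x v) * μ i v) ≠ 0) :
    (Matrix.of fun i j : Fin n => f i (x i ⊔ x j)).rank = n := by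
  classical
  set Z : Matrix (Fin n) (Fin n) ℂ :=
    Matrix.of fun v j => if x v ≤ x j then (1 : ℂ) else 0 with hZ
  set M : Matrix (Fin n) (Fin n) ℂ := Matrix.of μ with hM
  -- M * Z = 1
  have hMZ : M * Z = 1 := by
    ext i j
    simp only [Matrix.mul_apply, hM, hZ, Matrix.of_apply, mul_ite, mul_one,
      mul_zero, Matrix.one_apply]
    by_cases hij : x i ≤ x j
    · rw [← Finset.sum_filter, ← hμ i j hij]
      refine (Finset.sum_subset ?_ ?_).symm
      · intro v hv
        simp only [Finset.mem_filter, Finset.mem_univ, true_and] at hv ⊢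
        exact hv.2
      · intro v hv hv'
        simp only [Finset.mem_filter, Finset.mem_univ, true_and] at hv hv'
        exact hμ0 i v (fun h => hv' ⟨h, hv⟩)
    · have hne : i ≠ j := fun h => hij (h ▸ le_refl (x i))
      rw [if_neg hne]
      apply Finset.sum_eq_zero
      intro v _
      split_ifs with hvj
      · by_cases hiv : x i ≤ x v
        · exact absurd (hiv.trans hvj) hij
        · exact hμ0 i v hiv
      · rfl
  have hZM : Z * M = 1 := mul_eq_one_comm.mp hMZ
  -- the Ψ function (full sum version)
  set Ψ : Fin n → Fin n → ℂ := fun i v => ∑ w, f i (x w) * μ v w with hΨdef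
  have hΨeq : ∀ i : Fin n, Ψ i i =
      ∑ v ∈ univ.filter (fun v => x i ≤ x v), f i (x v) * μ i v := by
    intro i
    symm
    apply Finset.sum_subset (Finset.filter_subset _ _)
    intro v _ hv
    simp only [Finset.mem_filter, Finset.mem_univ, true_and] at hv
    rw [hμ0 i v hv, mul_zero]
  set B : Matrix (Fin n) (Fin n) ℂ :=
    Matrix.of fun i v => if x i ≤ x v then Ψ i v else 0 with hB
  -- factorization
  have hfact : (Matrix.of fun i j : Fin n => f i (x i ⊔ x j)) = B * Zᵀ := by
    ext i j
    obtain ⟨m, hm⟩ := hjoin i j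
    have key : ∀ v : Fin n, (x i ≤ x v ∧ x j ≤ x v) ↔ x m ≤ x v := by
      intro v
      rw [hm]
      exact ⟨fun h => sup_le h.1 h.2, fun h => ⟨le_sup_left.trans h, le_sup_right.trans h⟩⟩
    have : ∀ v : Fin n,
        B i v * Zᵀ v j = (if x m ≤ x v then (1:ℂ) else 0) * Ψ i v := by
      intro v
      simp only [hB, hZ, Matrix.of_apply, Matrix.transpose_apply]
      by_cases h1 : x i ≤ x v <;> by_cases h2 : x j ≤ x v <;>
        simp [h1, h2, (key v).symm, mul_comm]
    calc (Matrix.of fun i j : Fin n => f i (x i ⊔ x j)) i j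
        = f i (x m) := by rw [Matrix.of_apply, hm]
      _ = ∑ w, f i (x w) * (if m = w then (1:ℂ) else 0) := by
          rw [Finset.sum_eq_single m]
          · simp
          · intro w _ hw; simp [Ne.symm hw]
          · intro h; exact absurd (Finset.mem_univ m) h
      _ = ∑ w, f i (x w) * (Z * M) m w := by
          rw [hZM]; simp [Matrix.one_apply]
      _ = ∑ w, f i (x w) * ∑ v, Z m v * M v w := by
          simp [Matrix.mul_apply]
      _ = ∑ v, Z m v * ∑ w, f i (x w) * M v w := by
          simp only [Finset.mul_sum]
          rw [Finset.sum_comm]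
          refine Finset.sum_congr rfl fun v _ => Finset.sum_congr rfl fun w _ => by ring
      _ = ∑ v, B i v * Zᵀ v j := by
          refine Finset.sum_congr rfl fun v _ => ?_
          rw [this v]
          simp [hZ, hΨdef, hM, Finset.mul_sum]
      _ = (B * Zᵀ) i j := (Matrix.mul_apply).symm
  -- B is upper triangular with nonzero diagonal
  have hBtri : B.BlockTriangular id := by
    intro i j hij
    simp only [id] at hij
    simp only [hB, Matrix.of_apply]
    rw [if_neg]
    intro h
    exact absurd (hxord i j h) (not_le.mpr hij)
  have hBdiag : ∀ i, B i i = Ψ i i := by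
    intro i; simp [hB]
  have hBdet : IsUnit B.det := by
    rw [Matrix.det_of_upperTriangular hBtri]
    apply IsUnit.of_mul_eq_one (∏ i, (B i i)⁻¹)
    rw [← Finset.prod_mul_distrib]
    apply Finset.prod_eq_one
    intro i _
    rw [mul_inv_cancel₀]
    rw [hBdiag i, hΨeq i]
    exact hΨ i
  have hZdet : IsUnit (Zᵀ).det := by
    have h1 : Mᵀ * Zᵀ = 1 := by
      rw [← Matrix.transpose_mul, hZM, Matrix.transpose_one]
    exact (Matrix.isUnit_iff_isUnit_det _).mp
      ⟨⟨Zᵀ, Mᵀ, mul_eq_one_comm.mp h1, h1⟩, rfl⟩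
  rw [hfact, Matrix.rank_mul_eq_left_of_isUnit_det _ _ hZdet,
    Matrix.rank_of_isUnit _ ((Matrix.isUnit_iff_isUnit_det B).mpr hBdet)]
  simp
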